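/- Let S be a nontrivial, additively idempotent (s + s = s for all s), anti-bounded semiring. Then S is a left CP-semiring if and only if S is isomorphic to the Boolean semifield B, or S is isomorphic to the three-element semiring B₃. -/
import Mathlib


universe u

/-- A left CP-semiring: every cyclic left `S`-semimodule is projective. -/
def IsLeftCPSemiring (S : Type u) [Semiring S] : Prop :=
  ∀ (M : Type u) [AddCommMonoid M] [Module S M],
    (∃ m : M, Submodule.span S {m} = ⊤) → Module.Projective S M

/-- `S` is (isomorphic to) the Boolean semifield `B = {0, 1}` with `1 + 1 = 1`. -/
def IsBooleanSemifield (S : Type u) [Semiring S] : Prop :=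
  (∀ x : S, x = 0 ∨ x = 1) ∧ (0 : S) ≠ 1 ∧ (1 : S) + 1 = 1

/-- `S` is (isomorphic to) the three-element semiring `B₃` on the chain
`0 < 1 < 2` with `x + y = x ∨ y` and `x * y = 0` if `x = 0` or `y = 0`, and
`x * y = x ∨ y` otherwise. -/
def IsBThree (S : Type u) [Semiring S] : Prop :=
  (0 : S) ≠ 1 ∧ ∃ t : S, t ≠ 0 ∧ t ≠ 1 ∧ (∀ x : S, x = 0 ∨ x = 1 ∨ x = t) ∧
    (1 : S) + 1 = 1 ∧ (1 : S) + t = t ∧ t + t = t ∧ t * t = t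

section CollapseAux
variable {S : Type u} [Semiring S]

/-- The additive congruence on `S` collapsing the filter `{x | c + x = x}` to one point. -/
def collapseCon (c : S) : AddCon S where
  toSetoid :=
    ⟨fun x y => x = y ∨ (c + x = x ∧ c + y = y),
     ⟨fun _ => Or.inl rfl,
      fun h => h.elim (fun e => Or.inl e.symm) (fun ⟨h1, h2⟩ => Or.inr ⟨h2, h1⟩),
      by
        rintro x y z (rfl | ⟨ha, hb⟩) h2
        · exact h2
        · rcases h2 with rfl | ⟨hc, hd⟩
          · exact Or.inr ⟨ha, hb⟩
          · exact Or.inr ⟨ha, hd⟩⟩⟩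
  add' := by
    rintro w x y z (rfl | ⟨h1, h2⟩) (rfl | ⟨h3, h4⟩)
    · exact Or.inl rfl
    · exact Or.inr ⟨by rw [← add_assoc, add_comm c w, add_assoc, h3],
        by rw [← add_assoc, add_comm c w, add_assoc, h4]⟩
    · exact Or.inr ⟨by rw [← add_assoc, h1], by rw [← add_assoc, h2]⟩
    · exact Or.inr ⟨by rw [← add_assoc, h1], by rw [← add_assoc, h2]⟩

variable (c : S) (hone : ∀ s : S, s ≠ 0 → 1 + s = s)

def collapseSMul : SMul S (collapseCon c).Quotient where
  smul s := Quotient.map' (fun x => s * x) (by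
    rintro x y (rfl | ⟨h1, h2⟩)
    · exact Or.inl rfl
    by_cases hs : s = 0
    · subst hs; exact Or.inl (by show (0:S) * x = 0 * y; rw [zero_mul, zero_mul])
    · have key : ∀ w : S, c + w = w → c + s * w = s * w := by
        intro w hw
        have hsw : s * w = w + s * w := by
          conv_lhs => rw [← hone s hs]
          rw [add_mul, one_mul]
        calc c + s * w = c + (w + s * w) := by rw [← hsw]
          _ = (c + w) + s * w := (add_assoc _ _ _).symm
          _ = w + s * w := by rw [hw]
          _ = s * w := hsw.symm
      exact Or.inr ⟨key x h1, key y h2⟩)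

lemma collapse_smul_mk (s x : S) :
    (letI := collapseSMul c hone
     s • ((x : (collapseCon c).Quotient))) = ((s * x : S) : (collapseCon c).Quotient) := rfl

def collapseModule : @Module S (collapseCon c).Quotient _ _ :=
  letI := collapseSMul c hone
  { smul := (· • ·)
    one_smul := fun b => Quotient.inductionOn' b fun x => by
      show ((1 * x : S) : (collapseCon c).Quotient) = (x : (collapseCon c).Quotient)
      rw [one_mul]
    mul_smul := fun r s b => Quotient.inductionOn' b fun x => by
      show ((r * s * x : S) : (collapseCon c).Quotient) = ((r * (s * x) : S) : _)
      rw [mul_assoc]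
    smul_zero := fun s => by
      show ((s * 0 : S) : (collapseCon c).Quotient) = _
      rw [mul_zero]; rfl
    smul_add := fun s b₁ b₂ => Quotient.inductionOn₂' b₁ b₂ fun x y => by
      show ((s * (x + y) : S) : (collapseCon c).Quotient) = ((s * x : S) : _) + ((s * y : S) : _)
      rw [mul_add]; rfl
    add_smul := fun r s b => Quotient.inductionOn' b fun x => by
      show (((r + s) * x : S) : (collapseCon c).Quotient) = ((r * x : S) : _) + ((s * x : S) : _)
      rw [add_mul]; rfl
    zero_smul := fun b => Quotient.inductionOn' b fun x => by
      show ((0 * x : S) : (collapseCon c).Quotient) = _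
      rw [zero_mul]; rfl }

end CollapseAux

section Split
variable {S : Type u} [Semiring S]

lemma collapse_split (hone : ∀ s : S, s ≠ 0 → 1 + s = s) (hCP : IsLeftCPSemiring S) (c : S) :
    ∃ e : S, (e = 1 ∨ (c + e = e ∧ c + 1 = 1)) ∧
      ∀ u v : S, (u = v ∨ (c + u = u ∧ c + v = v)) → u * e = v * e := by
  letI := collapseSMul c hone
  letI := collapseModule c hone
  have hsmul : ∀ s x : S, s • ((x : (collapseCon c).Quotient)) = ((s * x : S) : _) :=
    fun s x => rfl
  -- the quotient linear map
  let π : S →ₗ[S] (collapseCon c).Quotient :=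
    { toFun := fun s => (s : (collapseCon c).Quotient)
      map_add' := fun a b => rfl
      map_smul' := fun s x => rfl }
  have hπ : Function.Surjective π := by
    intro x
    refine Quotient.inductionOn' x ?_
    intro s
    exact ⟨s, rfl⟩
  have hspan : ∃ m : (collapseCon c).Quotient, Submodule.span S {m} = ⊤ := by
    refine ⟨((1 : S) : _), ?_⟩
    rw [Submodule.eq_top_iff']
    intro x
    refine Quotient.inductionOn' x fun s => ?_
    have h1 : (s : S) • (((1 : S)) : (collapseCon c).Quotient) = ((s : S) : _) := by
      rw [hsmul, mul_one]
    rw [show (Quotient.mk'' s : (collapseCon c).Quotient) = ((s : S) : (collapseCon c).Quotient) from rfl, ← h1]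
    exact Submodule.smul_mem _ s (Submodule.mem_span_singleton_self _)
  haveI hproj : Module.Projective S (collapseCon c).Quotient := hCP _ hspan
  obtain ⟨σ, hσ⟩ := Module.projective_lifting_property π LinearMap.id hπ
  have hσ' : ∀ x, π (σ x) = x := fun x => congrArg (fun f => f x) (congrArg DFunLike.coe hσ)
  refine ⟨σ ((1 : S) : _), ?_, ?_⟩
  · have := hσ' ((1 : S) : _)
    exact (collapseCon c).eq.1 this
  · intro u v huv
    have hquv : ((u : S) : (collapseCon c).Quotient) = ((v : S) : _) := (collapseCon c).eq.2 huv
    have hu : σ ((u : S) : (collapseCon c).Quotient) = u * σ ((1 : S) : _) := by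
      rw [show ((u : S) : (collapseCon c).Quotient) = (u : S) • ((1 : S) : _) by
        rw [hsmul, mul_one], map_smul]
      rfl
    have hv : σ ((v : S) : (collapseCon c).Quotient) = v * σ ((1 : S) : _) := by
      rw [show ((v : S) : (collapseCon c).Quotient) = (v : S) • ((1 : S) : _) by
        rw [hsmul, mul_one], map_smul]
      rfl
    rw [← hu, ← hv, hquv]

lemma projective_of_g {M : Type u} [AddCommMonoid M] [Module S M]
    (m : M) (g : M → S)
    (hgadd : ∀ x y, g (x + y) = g x + g y)
    (hgsmul : ∀ (s : S) (x : M), g (s • x) = s * g x)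
    (hgsec : ∀ x, g x • m = x) : Module.Projective S M := by
  refine ⟨⟨{ toFun := fun x => Finsupp.single m (g x)
             map_add' := fun x y => by
               simp only [hgadd, Finsupp.single_add]
             map_smul' := fun s x => by
               simp only [RingHom.id_apply, hgsmul, Finsupp.smul_single'] }, fun x => ?_⟩⟩
  simp only [LinearMap.coe_mk, AddHom.coe_mk, Finsupp.linearCombination_single, id_eq]
  exact hgsec x

end Split

/-- a nontrivial additively idempotent anti-bounded semiring is a
left CP-semiring iff it is isomorphic to `B` or to `B₃`. -/
theorem antibounded_addIdempotent_isLeftCPSemiring_iff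
    (S : Type u) [Semiring S] [Nontrivial S]
    (hadd : ∀ s : S, s + s = s)
    (hab : ∀ a : S, (∃ b : S, a + b = 0) ∨ (∃ s : S, a = 1 + s)) :
    IsLeftCPSemiring S ↔ IsBooleanSemifield S ∨ IsBThree S := by
  have h01 : (0 : S) ≠ 1 := zero_ne_one
  constructor
  · intro hCP
    have hzero : ∀ a b : S, a + b = 0 → a = 0 := by
      intro a b h
      calc a = a + (a + b) := by rw [h, add_zero]
        _ = (a + a) + b := by rw [← add_assoc]
        _ = a + b := by rw [hadd]
        _ = 0 := h
    have hone : ∀ s : S, s ≠ 0 → 1 + s = s := by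
      intro s hs
      rcases hab s with ⟨b, hb⟩ | ⟨r, hr⟩
      · exact absurd (hzero s b hb) hs
      · rw [hr, ← add_assoc, hadd]
    obtain ⟨t, he1, hekey⟩ := collapse_split hone hCP 1
    have ht0 : t ≠ 0 := by
      rcases he1 with rfl | ⟨h1, _⟩
      · exact fun h => h01 h.symm
      · intro h; rw [h, add_zero] at h1; exact h01 h1.symm
    have habs : ∀ u : S, u ≠ 0 → u * t = t := by
      intro u hu
      have h := hekey u 1 (Or.inr ⟨hone u hu, hadd 1⟩)
      rwa [one_mul] at h
    have htt : t * t = t := habs t ht0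
    have htop : ∀ a : S, a + t = t := by
      intro a
      by_cases ha : a = 0
      · rw [ha, zero_add]
      · calc a + t = a * 1 + a * t := by rw [mul_one, habs a ha]
          _ = a * (1 + t) := (mul_add a 1 t).symm
          _ = a * t := by rw [hone t ht0]
          _ = t := habs a ha
    by_cases ht1 : t = 1
    · left
      refine ⟨?_, h01, hadd 1⟩
      intro x
      by_cases hx : x = 0
      · exact Or.inl hx
      · right
        have h1 := htop x
        rw [ht1] at h1
        calc x = 1 + x := (hone x hx).symm
          _ = x + 1 := add_comm 1 x
          _ = 1 := h1
    · right
      refine ⟨h01, t, ht0, ht1, ?_, hadd 1, hone t ht0, hadd t, htt⟩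
      intro x
      by_cases hx0 : x = 0
      · exact Or.inl hx0
      by_cases hx1 : x = 1
      · exact Or.inr (Or.inl hx1)
      refine Or.inr (Or.inr ?_)
      obtain ⟨e', he', hkey'⟩ := collapse_split hone hCP x
      have he'1 : e' = 1 := by
        rcases he' with h | ⟨_, h⟩
        · exact h
        · exact absurd (calc x = 1 + x := (hone x hx0).symm
            _ = x + 1 := add_comm _ _
            _ = 1 := h) hx1
      have h := hkey' x t (Or.inr ⟨hadd x, htop x⟩)
      rwa [he'1, mul_one, mul_one] at h
  · intro h M _ _ hcyc
    obtain ⟨m, hm⟩ := hcyc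
    classical
    have hx : ∀ x : M, ∃ s : S, s • m = x := by
      intro x
      have : x ∈ Submodule.span S {m} := by rw [hm]; exact Submodule.mem_top
      exact Submodule.mem_span_singleton.1 this
    rcases h with ⟨hcl, -, h11⟩ | ⟨-, t, ht0, ht1, hcl, h11, h1t, htt, htmul⟩
    · -- Boolean case
      have hmem : ∀ x : M, x = 0 ∨ x = m := by
        intro x
        obtain ⟨s, hs⟩ := hx x
        rcases hcl s with rfl | rfl
        · exact Or.inl (by rw [← hs, zero_smul])
        · exact Or.inr (by rw [← hs, one_smul])
      by_cases hm0 : m = 0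
      · refine projective_of_g m (fun _ => 0) (fun x y => (add_zero 0).symm)
          (fun s x => (mul_zero s).symm) ?_
        intro x
        rw [zero_smul]
        rcases hmem x with h | h
        · exact h.symm
        · rw [h, hm0]
      · have hmm : m + m = m := by rw [← one_smul S m, ← add_smul, h11]
        refine projective_of_g m (fun x => if x = 0 then 0 else 1) ?_ ?_ ?_
        · intro x y
          rcases hmem x with rfl | rfl <;> rcases hmem y with rfl | rfl <;>
            simp [hm0, hmm, h11]
        · intro s x
          rcases hcl s with rfl | rfl <;> simp
        · intro x
          rcases hmem x with rfl | rfl <;> simp [hm0]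
    · -- B₃ case
      have hmem : ∀ x : M, x = 0 ∨ x = m ∨ x = t • m := by
        intro x
        obtain ⟨s, hs⟩ := hx x
        rcases hcl s with rfl | rfl | rfl
        · exact Or.inl (by rw [← hs, zero_smul])
        · exact Or.inr (Or.inl (by rw [← hs, one_smul]))
        · exact Or.inr (Or.inr hs.symm)
      by_cases hm0 : m = 0
      · refine projective_of_g m (fun _ => 0) (fun x y => (add_zero 0).symm)
          (fun s x => (mul_zero s).symm) ?_
        intro x
        rw [zero_smul]
        rcases hmem x with h | h | h
        · exact h.symm
        · rw [h, hm0]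
        · rw [h, hm0, smul_zero]
      have hmm : m + m = m := by rw [← one_smul S m, ← add_smul, h11]
      have hmtm : m + t • m = t • m := by
        calc m + t • m = 1 • m + t • m := by rw [one_smul]
          _ = (1 + t) • m := (add_smul 1 t m).symm
          _ = t • m := by rw [h1t]
      by_cases htm : t • m = m
      · refine projective_of_g m (fun x => if x = 0 then 0 else t) ?_ ?_ ?_
        · intro x y
          have hmem2 : ∀ x : M, x = 0 ∨ x = m := by
            intro x
            rcases hmem x with h | h | h
            exacts [Or.inl h, Or.inr h, Or.inr (h.trans htm)]
          rcases hmem2 x with rfl | rfl <;> rcases hmem2 y with rfl | rfl <;>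
            simp [hm0, hmm, htt]
        · intro s x
          rcases hcl s with rfl | rfl | rfl
          · simp
          · simp
          · rcases hmem x with rfl | rfl | rfl <;>
              simp [htm, hm0, htmul, smul_zero]
        · intro x
          rcases hmem x with rfl | rfl | rfl <;> simp [hm0, htm]
      · have htm0 : t • m ≠ 0 := by
          intro h
          apply hm0
          rw [h, add_zero] at hmtm
          exact hmtm
        have htmtm : t • m + t • m = t • m := by rw [← add_smul, htt]
        have httm : t • (t • m) = t • m := by rw [← mul_smul, htmul]
        have hmtm' : t • m + m = t • m := by rw [add_comm]; exact hmtm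
        have ht1' : t + 1 = t := by rw [add_comm]; exact h1t
        refine projective_of_g m
          (fun x => if x = 0 then 0 else if x = m then 1 else t) ?_ ?_ ?_
        · intro x y
          rcases hmem x with rfl | rfl | rfl <;> rcases hmem y with rfl | rfl | rfl <;>
            simp [hm0, hmm, hmtm, hmtm', htmtm, htm0, htm, h11, h1t, ht1', htt]
        · intro s x
          rcases hcl s with rfl | rfl | rfl
          · simp
          · simp
          · rcases hmem x with rfl | rfl | rfl <;>
              simp [httm, htm0, htm, htmul, hm0, smul_zero]
        · intro x
          rcases hmem x with rfl | rfl | rfl <;> simp [hm0, htm0, htm]
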